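/- Let q be a power of 2 and let c_1,...,c_t be t distinct codewords of an [n,k]-RS code over F_q with evaluation vector α, corresponding to polynomials f_1,...,f_t of degree < k. Let I_1,...,I_t ⊆ [n] satisfy I_i ∩ I_j ⊆ I(c_i, c_j) (the agreement set of c_i and c_j) for all i < j. Then the vector f = (f_i + f_j : {i,j} ∈ C([t],2)) ∈ F_q^{C(t,2)k}, concatenated in lexicographic order of pairs, is a nonzero vector in the kernel of the t-wise intersection matrix M_{k,(I_1,...,I_t)}(α). -/

import Mathlib

/-- Edges of the complete graph on `Fin t`: ordered pairs `(i,j)` with `i < j`. -/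
abbrev Edge (t : ℕ) := {p : Fin t × Fin t // p.1 < p.2}

/-- The `t`-wise intersection matrix `M_{k,(I_1,...,I_t)}` with `t = m+1` vertices:
the top rows form `B_t ⊗ I_k`, where `B_t` has one row for each triangle `Δ_{ij,last}`
(indexed by the edge `(i,j)` of `K_m`), and the bottom rows form the block-diagonal matrix
of Vandermonde blocks `V_k(I_i ∩ I_j)` over the edges `{i,j}` of `K_t`. -/
noncomputable def Mt (F : Type*) [Field F] (n m k : ℕ) (I : Fin (m + 1) → Finset (Fin n)) :
    Matrix ((Edge m × Fin k) ⊕ (Σ e : Edge (m + 1), {x : Fin n // x ∈ I e.1.1 ∩ I e.1.2}))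
      (Edge (m + 1) × Fin k) (MvPolynomial (Fin n) F) :=
  fun r c =>
    match r with
    | Sum.inl (p, a) =>
        if c.1.1.1 ∈ ({p.1.1.castSucc, p.1.2.castSucc, Fin.last m} : Finset (Fin (m + 1))) ∧
            c.1.1.2 ∈ ({p.1.1.castSucc, p.1.2.castSucc, Fin.last m} : Finset (Fin (m + 1))) ∧
            a = c.2 then 1 else 0
    | Sum.inr ⟨e, x⟩ => if e = c.1 then MvPolynomial.X x.1 ^ (c.2 : ℕ) else 0

/-- Lemma (codewords in a small ball give a kernel vector of the intersection matrix):
over a field of characteristic 2, if `c_1,...,c_t` are distinct codewords of an `[n,k]`-RS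
code given by polynomials `f_i` of degree `< k`, and `I_i ∩ I_j` is contained in the
agreement set of `c_i` and `c_j` for all `i ≠ j`, then the concatenated vector
`(f_i + f_j : {i,j} ∈ C([t],2))` is a nonzero vector in the kernel of the evaluated
`t`-wise intersection matrix `M_{k,(I_1,...,I_t)}(α)`. (Here `t = m+1 ≥ 3`.) -/
theorem stmt_11 (n m k : ℕ) (hm : 2 ≤ m) (hk : 0 < k)
    (F : Type*) [Field F] [Fintype F] [DecidableEq F] [CharP F 2]
    (α : Fin n → F)
    (fI : Fin (m + 1) → Polynomial F)
    (hdeg : ∀ i, (fI i).degree < (k : WithBot ℕ))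
    (hdist : ∀ i j : Fin (m + 1), i ≠ j →
      (fun x : Fin n => (fI i).eval (α x)) ≠ fun x : Fin n => (fI j).eval (α x))
    (I : Fin (m + 1) → Finset (Fin n))
    (hagree : ∀ i j : Fin (m + 1), i ≠ j → ∀ x ∈ I i ∩ I j,
      (fI i).eval (α x) = (fI j).eval (α x)) :
    (fun c : Edge (m + 1) × Fin k => (fI c.1.1.1 + fI c.1.1.2).coeff (c.2 : ℕ)) ≠ 0 ∧
    ((Mt F n m k I).map (MvPolynomial.eval α)).mulVec
      (fun c : Edge (m + 1) × Fin k => (fI c.1.1.1 + fI c.1.1.2).coeff (c.2 : ℕ)) = 0 := by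

  classical
  have h2 : (2 : F) = 0 := by exact_mod_cast (CharP.cast_eq_zero F 2)
  have hnd : ∀ i j : Fin (m + 1), (fI i + fI j).natDegree < k := by
    intro i j
    have hd : (fI i + fI j).degree < (k : WithBot ℕ) :=
      lt_of_le_of_lt (Polynomial.degree_add_le _ _) (max_lt (hdeg i) (hdeg j))
    by_cases hp : fI i + fI j = 0
    · simpa [hp] using hk
    · exact (Polynomial.natDegree_lt_iff_degree_lt hp).mpr hd
  constructor
  · -- the vector is nonzero
    have h01 : (0 : Fin (m + 1)) < 1 := by
      rw [Fin.lt_def, Fin.val_zero, Fin.val_one', Nat.mod_eq_of_lt (by omega)]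
      omega
    have hne : fI 0 + fI 1 ≠ 0 := by
      intro h
      apply hdist 0 1 (ne_of_lt h01)
      funext x
      have he : (fI 0).eval (α x) + (fI 1).eval (α x) = 0 := by
        rw [← Polynomial.eval_add, h, Polynomial.eval_zero]
      linear_combination he - (fI 1).eval (α x) * h2
    intro hzero
    have := congrFun hzero (⟨(0, 1), h01⟩, ⟨(fI 0 + fI 1).natDegree, hnd 0 1⟩)
    exact Polynomial.leadingCoeff_ne_zero.mpr hne (by simpa using this)
  · funext r
    cases r with
    | inr ex =>
      obtain ⟨e, x⟩ := ex
      have hij : e.1.1 ≠ e.1.2 := ne_of_lt e.2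
      simp only [Matrix.mulVec, dotProduct, Matrix.map_apply, Mt, Pi.zero_apply]
      have hent : ∀ c : Edge (m + 1) × Fin k,
          MvPolynomial.eval α (if e = c.1 then MvPolynomial.X x.1 ^ (c.2 : ℕ) else 0)
            = if e = c.1 then α x.1 ^ (c.2 : ℕ) else 0 := by
        intro c
        split <;> simp
      simp only [hent]
      rw [Fintype.sum_prod_type_right]
      simp only [ite_mul, zero_mul, Finset.sum_ite_eq, Finset.mem_univ, if_true]
      rw [Fin.sum_univ_eq_sum_range (fun b => α x.1 ^ b * (fI e.1.1 + fI e.1.2).coeff b) k]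
      have key : ∑ b ∈ Finset.range k, α x.1 ^ b * (fI e.1.1 + fI e.1.2).coeff b
          = (fI e.1.1 + fI e.1.2).eval (α x.1) := by
        rw [Polynomial.eval_eq_sum_range' (hnd e.1.1 e.1.2) (α x.1)]
        exact Finset.sum_congr rfl fun i _ => mul_comm _ _
      rw [key, Polynomial.eval_add, hagree e.1.1 e.1.2 hij x.1 x.2]
      exact CharTwo.add_self_eq_zero _
    | inl pa =>
      obtain ⟨p, a⟩ := pa
      have huv : p.1.1.castSucc < p.1.2.castSucc := Fin.castSucc_lt_castSucc_iff.mpr p.2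
      have hvw : p.1.2.castSucc < Fin.last m := Fin.castSucc_lt_last _
      have huw : p.1.1.castSucc < Fin.last m := huv.trans hvw
      set u := p.1.1.castSucc with hu
      set v := p.1.2.castSucc with hv
      set w := Fin.last m with hw
      simp only [Matrix.mulVec, dotProduct, Matrix.map_apply, Mt, Pi.zero_apply]
      have hent : ∀ c : Edge (m + 1) × Fin k,
          MvPolynomial.eval α (if c.1.1.1 ∈ ({u, v, w} : Finset (Fin (m + 1))) ∧
              c.1.1.2 ∈ ({u, v, w} : Finset (Fin (m + 1))) ∧ a = c.2 then 1 else 0)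
            * (fI c.1.1.1 + fI c.1.1.2).coeff (c.2 : ℕ)
          = if c.1.1.1 ∈ ({u, v, w} : Finset (Fin (m + 1))) ∧
              c.1.1.2 ∈ ({u, v, w} : Finset (Fin (m + 1))) ∧ a = c.2 then
              (fI c.1.1.1 + fI c.1.1.2).coeff (c.2 : ℕ) else 0 := by
        intro c; split <;> simp
      simp only [← hu, ← hv, ← hw, hent]
      rw [← Finset.sum_filter]
      have hset : Finset.univ.filter (fun c : Edge (m + 1) × Fin k =>
            c.1.1.1 ∈ ({u, v, w} : Finset (Fin (m + 1))) ∧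
            c.1.1.2 ∈ ({u, v, w} : Finset (Fin (m + 1))) ∧ a = c.2)
          = {(⟨(u, v), huv⟩, a), (⟨(u, w), huw⟩, a), (⟨(v, w), hvw⟩, a)} := by
        ext c
        obtain ⟨⟨⟨y, z⟩, hyz⟩, b⟩ := c
        simp only [Finset.mem_filter, Finset.mem_univ, true_and, Finset.mem_insert,
          Finset.mem_singleton]
        constructor
        · rintro ⟨h1, h2, rfl⟩
          rcases h1 with rfl | rfl | rfl <;> rcases h2 with rfl | rfl | rfl <;>
            first
              | exact Or.inl rfl
              | exact Or.inr (Or.inl rfl)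
              | exact Or.inr (Or.inr rfl)
              | exact absurd hyz (lt_irrefl _)
              | exact absurd hyz (lt_asymm huv)
              | exact absurd hyz (lt_asymm huw)
              | exact absurd hyz (lt_asymm hvw)
        · rintro (h | h | h) <;>
            simp only [Prod.mk.injEq, Subtype.mk.injEq] at h <;>
            obtain ⟨⟨rfl, rfl⟩, rfl⟩ := h <;> simp
      rw [hset, Finset.sum_insert (by
            simp [Prod.ext_iff, Subtype.ext_iff, hvw.ne, huv.ne]),
        Finset.sum_insert (by simp [Prod.ext_iff, Subtype.ext_iff, huv.ne]),
        Finset.sum_singleton]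
      simp only [Polynomial.coeff_add]
      linear_combination ((fI u).coeff (a : ℕ) + (fI v).coeff (a : ℕ)
        + (fI w).coeff (a : ℕ)) * h2
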